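/- Fix r > 0, and for a complex number z with 0 < |z| < min(2π, 2r) and N ∈ ℕ set G_N(z) = z/(2r) − (π/(2r))·∑_{k=−N}^{N} coth( π(z + 2πk)/(2r) ). Then for each such z the limit G(z) = lim_{N→∞} G_N(z) exists, and lim_{z→0, z≠0} ( G(z) + 1/z ) / z = 1/(2r) − π²/(12r²) + (π²/(2r²))·∑_{k=1}^∞ sinh(kπ²/r)^{-2}. -/

import Mathlib

open Real Filter

/-- The complex hyperbolic cotangent. -/
noncomputable def ccoth (w : ℂ) : ℂ := Complex.cosh w / Complex.sinh w

namespace Stmt16Aux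

lemma sinh_norm_ge (w : ℂ) : Real.sinh w.re ≤ ‖Complex.sinh w‖ := by
  rw [Complex.sinh, Real.sinh_eq]
  calc (Real.exp w.re - Real.exp (-w.re)) / 2
      = (‖Complex.exp w‖ - ‖Complex.exp (-w)‖) / 2 := by
        simp [Complex.norm_exp]
    _ ≤ ‖Complex.exp w - Complex.exp (-w)‖ / 2 := by
        gcongr; exact norm_sub_norm_le _ _
    _ = ‖(Complex.exp w - Complex.exp (-w)) / 2‖ := by
        rw [norm_div]; norm_num

lemma sinh_ne_zero_of_re_pos {w : ℂ} (h : 0 < w.re) : Complex.sinh w ≠ 0 := by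
  have h1 := sinh_norm_ge w
  have h2 : 0 < Real.sinh w.re := by rwa [Real.sinh_pos_iff]
  intro h0
  rw [h0] at h1
  simp at h1
  linarith

lemma sinh_ne_zero_small {w : ℂ} (h0 : w ≠ 0) (h : ‖w‖ < π) : Complex.sinh w ≠ 0 := by
  intro hs
  have h1 : Complex.sin (w * Complex.I) = 0 := by rw [Complex.sin_mul_I, hs, zero_mul]
  rw [Complex.sin_eq_zero_iff] at h1
  obtain ⟨k, hk⟩ := h1
  have h2 : ‖w * Complex.I‖ = ‖w‖ := by simp
  rw [hk] at h2
  have h3 : ‖(k : ℂ) * (π : ℂ)‖ = |(k : ℝ)| * π := by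
    rw [norm_mul]
    simp [Complex.norm_real, abs_of_pos Real.pi_pos]
  rw [h3] at h2
  have h4 : |(k : ℝ)| < 1 := by
    by_contra h5
    push_neg at h5
    nlinarith [Real.pi_pos]
  have h6 : k = 0 := by
    have h7 : |k| < 1 := by
      rw [← Int.cast_abs] at h4
      exact_mod_cast h4
    have h8 := abs_lt.mp h7
    omega
  rw [h6] at hk
  simp at hk
  exact h0 hk

lemma ccoth_neg (w : ℂ) : ccoth (-w) = - ccoth w := by
  simp [ccoth, Complex.sinh_neg, Complex.cosh_neg, div_neg]

lemma hasDerivAt_ccoth {w : ℂ} (h : Complex.sinh w ≠ 0) :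
    HasDerivAt ccoth (-((Complex.sinh w) ^ 2)⁻¹) w := by
  have h1 := (Complex.hasDerivAt_cosh w).div (Complex.hasDerivAt_sinh w) h
  have h2 : Complex.sinh w * Complex.sinh w - Complex.cosh w * Complex.cosh w = -1 := by
    linear_combination (-1 : ℂ) * Complex.cosh_sq_sub_sinh_sq w
  rw [h2, neg_div, one_div] at h1
  exact h1

lemma ccoth_sub_one {w : ℂ} (h : Complex.sinh w ≠ 0) :
    ccoth w - 1 = Complex.exp (-w) / Complex.sinh w := by
  rw [ccoth, ← Complex.cosh_sub_sinh w]
  field_simp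

lemma norm_ccoth_sub_one {w : ℂ} (h : 0 < w.re) :
    ‖ccoth w - 1‖ ≤ (Real.sinh w.re)⁻¹ := by
  rw [ccoth_sub_one (sinh_ne_zero_of_re_pos h), norm_div]
  have h1 : ‖Complex.exp (-w)‖ ≤ 1 := by
    simp [Complex.norm_exp, Real.exp_le_one_iff]
    linarith
  have h2 : 0 < Real.sinh w.re := by rwa [Real.sinh_pos_iff]
  have h3 := sinh_norm_ge w
  calc ‖Complex.exp (-w)‖ / ‖Complex.sinh w‖ ≤ 1 / Real.sinh w.re := by
        gcongr
    _ = (Real.sinh w.re)⁻¹ := one_div _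

lemma real_sinh_lower {c x : ℝ} (hc : 0 < c) (hx : c ≤ x) :
    Real.sinh c / 2 * Real.exp (x - c) ≤ Real.sinh x := by
  have h1 : Real.sinh x = Real.sinh c * Real.cosh (x - c) + Real.cosh c * Real.sinh (x - c) := by
    rw [← Real.sinh_add]; ring_nf
  have h2 : Real.exp (x - c) / 2 ≤ Real.cosh (x - c) := by
    rw [Real.cosh_eq]
    have := Real.exp_pos (-(x - c))
    linarith
  have h3 : 0 ≤ Real.sinh (x - c) := Real.sinh_nonneg_iff.mpr (by linarith)
  have h4 : 0 < Real.cosh c := Real.cosh_pos c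
  have h5 : 0 < Real.sinh c := Real.sinh_pos_iff.mpr hc
  nlinarith

set_option maxHeartbeats 1000000 in
lemma summable_inv_sinh (c d : ℝ) (hc : 0 < c) (hd : 0 < d) (m : ℕ) (hm : 1 ≤ m) :
    Summable (fun k : ℕ => ((Real.sinh (c + d * k)) ^ m)⁻¹) := by
  have hq : Real.exp (-d) < 1 := Real.exp_lt_one_iff.mpr (by linarith)
  have hq0 : 0 ≤ Real.exp (-d) := (Real.exp_pos _).le
  have key : ∀ k : ℕ, ((Real.sinh (c + d * k)) ^ m)⁻¹ ≤ (2 / Real.sinh c) ^ m * Real.exp (-d) ^ k := by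
    intro k
    have hck : c ≤ c + d * k := by
      have := mul_nonneg hd.le (Nat.cast_nonneg (α := ℝ) k)
      linarith
    have h5 : 0 < Real.sinh c := Real.sinh_pos_iff.mpr hc
    have h1 : Real.sinh c / 2 * Real.exp (d * k) ≤ Real.sinh (c + d * k) := by
      have := real_sinh_lower hc hck
      simpa using this
    have hpos : 0 < Real.sinh c / 2 * Real.exp (d * k) := by positivity
    have h2 : ((Real.sinh (c + d * k)) ^ m)⁻¹ ≤ ((Real.sinh c / 2 * Real.exp (d * k)) ^ m)⁻¹ := by
      gcongr
    refine h2.trans ?_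
    have e1 : ((Real.sinh c / 2 * Real.exp (d * k)) ^ m)⁻¹
        = (2 / Real.sinh c) ^ m * Real.exp (-(d * k)) ^ m := by
      rw [mul_pow, mul_inv, ← inv_pow, ← inv_pow, inv_div, ← Real.exp_neg]
    rw [e1]
    have h4 : Real.exp (-(d * k)) ^ m ≤ Real.exp (-d) ^ k := by
      rw [← Real.exp_nat_mul, ← Real.exp_nat_mul]
      apply Real.exp_le_exp.mpr
      have : (1 : ℝ) ≤ m := by exact_mod_cast hm
      nlinarith [Nat.cast_nonneg (α := ℝ) k]
    gcongr
  exact Summable.of_nonneg_of_le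
    (fun k => by
      have h0 : 0 ≤ Real.sinh (c + d * k) := Real.sinh_nonneg_iff.mpr (by positivity)
      positivity)
    key ((summable_geometric_of_lt_one hq0 hq).mul_left _)

noncomputable def al (r : ℝ) : ℝ := π / (2 * r)

noncomputable def wk (r : ℝ) (k : ℤ) (z : ℂ) : ℂ := (al r : ℂ) * (z + ((2 * π * k : ℝ) : ℂ))

noncomputable def gk (r : ℝ) (k : ℤ) (z : ℂ) : ℂ := ccoth (wk r k z)

noncomputable def Fk (r : ℝ) (k : ℕ) (z : ℂ) : ℂ := gk r (k + 1) z + gk r (-(k + 1)) z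

noncomputable def Dk (r : ℝ) (k : ℕ) (z : ℂ) : ℂ :=
  -(al r : ℂ) * ((Complex.sinh (wk r (k + 1) z)) ^ 2)⁻¹
    - (al r : ℂ) * ((Complex.sinh (wk r (-(k + 1)) z)) ^ 2)⁻¹

noncomputable def Gdef (r : ℝ) (z : ℂ) : ℂ :=
  z / (2 * (r : ℂ)) - ((al r : ℂ)) * (gk r 0 z + ∑' k : ℕ, Fk r k z)

lemma al_pos {r : ℝ} (hr : 0 < r) : 0 < al r := by
  unfold al
  positivity

lemma alC (r : ℝ) : ((al r : ℝ) : ℂ) = (π : ℂ) / (2 * (r : ℂ)) := by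
  unfold al
  push_cast
  ring

lemma wk_re (r : ℝ) (k : ℤ) (z : ℂ) : (wk r k z).re = al r * (z.re + 2 * π * k) := by
  simp [wk, Complex.mul_re, Complex.ofReal_re, Complex.ofReal_im, Complex.add_re,
    Complex.add_im]

lemma wk_neg (r : ℝ) (k : ℤ) (z : ℂ) : wk r (-k) z = - wk r k (-z) := by
  unfold wk
  push_cast
  ring

lemma gk_neg (r : ℝ) (k : ℤ) (z : ℂ) : gk r (-k) z = - gk r k (-z) := by
  rw [gk, gk, wk_neg, ccoth_neg]

lemma Fk_zero (r : ℝ) (k : ℕ) : Fk r k 0 = 0 := by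
  rw [Fk, gk_neg]
  simp

lemma neg_norm_le_re (z : ℂ) : -‖z‖ ≤ z.re := by
  have h1 := abs_le.mp (Complex.abs_re_le_norm z)
  linarith [h1.1]

lemma re_wk_ge {r : ℝ} (hr : 0 < r) (k : ℕ) (z : ℂ) :
    al r * (2 * π - ‖z‖) + 2 * π * al r * k ≤ (wk r (k + 1) z).re := by
  rw [wk_re]
  have h1 := neg_norm_le_re z
  have h2 := al_pos hr
  push_cast
  nlinarith [h2]

lemma re_wk_pos {r : ℝ} (hr : 0 < r) (k : ℕ) (z : ℂ) (hz : ‖z‖ < 2 * π) :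
    0 < (wk r (k + 1) z).re := by
  have h1 := re_wk_ge hr k z
  have h2 := al_pos hr
  have h3 : 0 ≤ 2 * π * al r * k := by positivity
  nlinarith

lemma norm_gk_sub_one {r : ℝ} (hr : 0 < r) (k : ℕ) (z : ℂ) (hz : ‖z‖ < 2 * π) :
    ‖gk r (k + 1) z - 1‖ ≤ (Real.sinh (al r * (2 * π - ‖z‖) + 2 * π * al r * k))⁻¹ := by
  have hre := re_wk_pos hr k z hz
  have h1 := norm_ccoth_sub_one hre
  refine h1.trans ?_
  have h2 := re_wk_ge hr k z
  have ht : 0 < al r * (2 * π - ‖z‖) + 2 * π * al r * k := by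
    have := al_pos hr
    have h3 : 0 ≤ 2 * π * al r * k := by positivity
    nlinarith
  have h4 : 0 < Real.sinh (al r * (2 * π - ‖z‖) + 2 * π * al r * k) :=
    Real.sinh_pos_iff.mpr ht
  gcongr
  exact Real.sinh_le_sinh.mpr h2

lemma norm_Fk_le_cond1 {r : ℝ} (hr : 0 < r) (z : ℂ) (hz : ‖z‖ < 2 * π) (k : ℕ) :
    ‖Fk r k z‖ ≤ 2 * (Real.sinh (al r * (2 * π - ‖z‖) + 2 * π * al r * k))⁻¹ := by
  have h1 := norm_gk_sub_one hr k z hz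
  have hz' : ‖-z‖ < 2 * π := by rwa [norm_neg]
  have h2 := norm_gk_sub_one hr k (-z) hz'
  rw [norm_neg] at h2
  have h3 : Fk r k z = (gk r (k + 1) z - 1) - (gk r (k + 1) (-z) - 1) := by
    rw [Fk, gk_neg]
    ring
  rw [h3]
  calc ‖(gk r (k + 1) z - 1) - (gk r (k + 1) (-z) - 1)‖
      ≤ ‖gk r (k + 1) z - 1‖ + ‖gk r (k + 1) (-z) - 1‖ := norm_sub_le _ _
    _ ≤ _ := by rw [two_mul]; exact add_le_add h1 h2

lemma summable_Fk {r : ℝ} (hr : 0 < r) (z : ℂ) (hz : ‖z‖ < 2 * π) :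
    Summable (fun k : ℕ => Fk r k z) := by
  have ht : 0 < al r * (2 * π - ‖z‖) := by
    have := al_pos hr
    nlinarith
  have hd : 0 < 2 * π * al r := by
    have := al_pos hr
    have := Real.pi_pos
    positivity
  have hs := (summable_inv_sinh _ _ ht hd 1 le_rfl).mul_left 2
  apply Summable.of_norm_bounded hs
  intro k
  have := norm_Fk_le_cond1 hr z hz k
  simpa [pow_one] using this

lemma sum_Icc_eq (h : ℤ → ℂ) (N : ℕ) :
    ∑ k ∈ Finset.Icc (-(N : ℤ)) (N : ℤ), h k
      = h 0 + ∑ k ∈ Finset.range N, (h (k + 1) + h (-(k + 1))) := by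
  induction N with
  | zero => simp
  | succ n ih =>
    have hset : Finset.Icc (-((n : ℤ) + 1)) ((n : ℤ) + 1)
        = insert (-((n : ℤ) + 1)) (insert ((n : ℤ) + 1) (Finset.Icc (-(n : ℤ)) (n : ℤ))) := by
      ext x
      simp only [Finset.mem_Icc, Finset.mem_insert]
      omega
    have e1 : ((n + 1 : ℕ) : ℤ) = (n : ℤ) + 1 := by push_cast; ring
    rw [e1, hset, Finset.sum_insert, Finset.sum_insert, ih, Finset.sum_range_succ]
    · push_cast
      ring
    · simp only [Finset.mem_Icc]
      omega
    · simp only [Finset.mem_insert, Finset.mem_Icc]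
      omega

lemma cond1 {r : ℝ} (hr : 0 < r) (z : ℂ) (hz : ‖z‖ < 2 * π) :
    Tendsto (fun N : ℕ =>
        z / (2 * (r : ℂ)) - ((π : ℂ) / (2 * (r : ℂ))) *
          ∑ k ∈ Finset.Icc (-(N : ℤ)) (N : ℤ),
            ccoth ((π : ℂ) * (z + 2 * (π : ℂ) * (k : ℂ)) / (2 * (r : ℂ))))
      atTop (nhds (Gdef r z)) := by
  have harg : ∀ k : ℤ, ccoth ((π : ℂ) * (z + 2 * (π : ℂ) * (k : ℂ)) / (2 * (r : ℂ))) = gk r k z := by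
    intro k
    unfold gk wk al
    congr 1
    push_cast
    ring
  have hsum := ((summable_Fk hr z hz).hasSum).tendsto_sum_nat
  have hmain : Tendsto (fun N : ℕ => z / (2 * (r : ℂ))
      - ((al r : ℝ) : ℂ) * (gk r 0 z + ∑ k ∈ Finset.range N, Fk r k z)) atTop (nhds (Gdef r z)) := by
    unfold Gdef
    exact Filter.Tendsto.const_sub _ (((hsum.const_add (gk r 0 z)).const_mul _))
  refine hmain.congr fun N => ?_
  simp only [harg]
  rw [sum_Icc_eq (fun k => gk r k z) N, ← alC]
  rfl

noncomputable def uB (r : ℝ) (k : ℕ) : ℝ :=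
  2 * al r * ((Real.sinh (al r * π + 2 * (al r * π) * k)) ^ 2)⁻¹

lemma summable_uB {r : ℝ} (hr : 0 < r) : Summable (uB r) := by
  have h1 : 0 < al r * π := by
    have := al_pos hr
    have := Real.pi_pos
    positivity
  have h2 : 0 < 2 * (al r * π) := by positivity
  exact (summable_inv_sinh _ _ h1 h2 2 one_le_two).mul_left _

lemma re_wk_ge_ball {r : ℝ} (hr : 0 < r) (k : ℕ) (z : ℂ) (hz : ‖z‖ ≤ π) :
    al r * π + 2 * (al r * π) * k ≤ (wk r (k + 1) z).re := by
  have h1 := re_wk_ge hr k z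
  have h2 := al_pos hr
  nlinarith

lemma sinh_wk_pos_ne {r : ℝ} (hr : 0 < r) (k : ℕ) (z : ℂ) (hz : ‖z‖ ≤ π) :
    Complex.sinh (wk r (k + 1) z) ≠ 0 := by
  apply sinh_ne_zero_of_re_pos
  have h1 := re_wk_ge_ball hr k z hz
  have h2 := al_pos hr
  have h3 := Real.pi_pos
  have h4 : 0 ≤ 2 * (al r * π) * k := by positivity
  nlinarith

lemma sinh_wk_neg_ne {r : ℝ} (hr : 0 < r) (k : ℕ) (z : ℂ) (hz : ‖z‖ ≤ π) :
    Complex.sinh (wk r (-(k + 1)) z) ≠ 0 := by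
  rw [show (-((k : ℤ) + 1)) = -((k : ℤ) + 1) from rfl, wk_neg, Complex.sinh_neg, neg_ne_zero]
  exact sinh_wk_pos_ne hr k (-z) (by rwa [norm_neg])

lemma hasDerivAt_wk (r : ℝ) (k : ℤ) (z : ℂ) :
    HasDerivAt (fun z => wk r k z) ((al r : ℂ)) z := by
  have h := ((hasDerivAt_id z).add_const (((2 * π * k : ℝ)) : ℂ)).const_mul ((al r : ℝ) : ℂ)
  simpa [wk] using h

lemma hasDerivAt_gk {r : ℝ} {k : ℤ} {z : ℂ} (h : Complex.sinh (wk r k z) ≠ 0) :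
    HasDerivAt (gk r k) (-(al r : ℂ) * ((Complex.sinh (wk r k z)) ^ 2)⁻¹) z := by
  have h1 := (hasDerivAt_ccoth h).comp z (hasDerivAt_wk r k z)
  rw [show -(al r : ℂ) * ((Complex.sinh (wk r k z)) ^ 2)⁻¹ = -((Complex.sinh (wk r k z)) ^ 2)⁻¹ * (al r : ℂ) by ring]
  exact h1

lemma hasDerivAt_Fk {r : ℝ} (hr : 0 < r) (k : ℕ) (z : ℂ) (hz : ‖z‖ ≤ π) :
    HasDerivAt (Fk r k) (Dk r k z) z := by
  have h1 := hasDerivAt_gk (r := r) (k := (k : ℤ) + 1) (z := z) (sinh_wk_pos_ne hr k z hz)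
  have h2 := hasDerivAt_gk (r := r) (k := -((k : ℤ) + 1)) (z := z) (sinh_wk_neg_ne hr k z hz)
  have h3 := h1.add h2
  rw [show Dk r k z = -(al r : ℂ) * ((Complex.sinh (wk r (k + 1) z)) ^ 2)⁻¹ + -(al r : ℂ) * ((Complex.sinh (wk r (-(k + 1)) z)) ^ 2)⁻¹ by unfold Dk; ring]
  exact h3

lemma norm_sinh_wk_ge {r : ℝ} (hr : 0 < r) (k : ℕ) (z : ℂ) (hz : ‖z‖ ≤ π) :
    Real.sinh (al r * π + 2 * (al r * π) * k) ≤ ‖Complex.sinh (wk r (k + 1) z)‖ := by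
  refine le_trans ?_ (sinh_norm_ge _)
  exact Real.sinh_le_sinh.mpr (re_wk_ge_ball hr k z hz)

lemma norm_sinh_wk_neg_ge {r : ℝ} (hr : 0 < r) (k : ℕ) (z : ℂ) (hz : ‖z‖ ≤ π) :
    Real.sinh (al r * π + 2 * (al r * π) * k) ≤ ‖Complex.sinh (wk r (-(k + 1)) z)‖ := by
  rw [wk_neg, Complex.sinh_neg, norm_neg]
  exact norm_sinh_wk_ge hr k (-z) (by rwa [norm_neg])

lemma norm_Dk_le {r : ℝ} (hr : 0 < r) (k : ℕ) (z : ℂ) (hz : ‖z‖ ≤ π) :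
    ‖Dk r k z‖ ≤ uB r k := by
  have hsp : 0 < Real.sinh (al r * π + 2 * (al r * π) * k) := by
    apply Real.sinh_pos_iff.mpr
    have := al_pos hr
    have := Real.pi_pos
    positivity
  have key : ∀ w : ℂ, Real.sinh (al r * π + 2 * (al r * π) * k) ≤ ‖Complex.sinh w‖ →
      ‖(al r : ℂ) * ((Complex.sinh w) ^ 2)⁻¹‖
        ≤ al r * ((Real.sinh (al r * π + 2 * (al r * π) * k)) ^ 2)⁻¹ := by
    intro w hw
    rw [norm_mul, norm_inv, norm_pow]
    have h2 : ‖((al r : ℝ) : ℂ)‖ = al r := by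
      rw [Complex.norm_real]
      exact abs_of_pos (al_pos hr)
    rw [h2]
    gcongr
    exact al_pos hr |>.le
  have k1 := key _ (norm_sinh_wk_ge hr k z hz)
  have k2 := key _ (norm_sinh_wk_neg_ge hr k z hz)
  unfold Dk uB
  calc ‖-(al r : ℂ) * ((Complex.sinh (wk r (k + 1) z)) ^ 2)⁻¹
        - (al r : ℂ) * ((Complex.sinh (wk r (-(k + 1)) z)) ^ 2)⁻¹‖
      ≤ ‖-(al r : ℂ) * ((Complex.sinh (wk r (k + 1) z)) ^ 2)⁻¹‖
        + ‖(al r : ℂ) * ((Complex.sinh (wk r (-(k + 1)) z)) ^ 2)⁻¹‖ := norm_sub_le _ _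
    _ ≤ _ := by
        rw [neg_mul, norm_neg]
        have := add_le_add k1 k2
        linarith

lemma ball_norm_lt {r : ℝ} {z : ℂ} (hz : z ∈ Metric.ball (0 : ℂ) (min π r)) :
    ‖z‖ < π ∧ ‖z‖ < r := by
  rw [Metric.mem_ball, dist_zero_right] at hz
  exact ⟨hz.trans_le (min_le_left _ _), hz.trans_le (min_le_right _ _)⟩

lemma norm_Fk_le_ball {r : ℝ} (hr : 0 < r) (k : ℕ) (z : ℂ)
    (hz : z ∈ Metric.ball (0 : ℂ) (min π r)) :
    ‖Fk r k z‖ ≤ uB r k * ‖z‖ := by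
  have h0 : (0 : ℂ) ∈ Metric.ball (0 : ℂ) (min π r) := by
    rw [Metric.mem_ball, dist_self]
    exact lt_min Real.pi_pos hr
  have hder : ∀ x ∈ Metric.ball (0 : ℂ) (min π r),
      HasDerivWithinAt (Fk r k) (Dk r k x) (Metric.ball (0 : ℂ) (min π r)) x := by
    intro x hx
    exact (hasDerivAt_Fk hr k x (ball_norm_lt hx).1.le).hasDerivWithinAt
  have hbd : ∀ x ∈ Metric.ball (0 : ℂ) (min π r), ‖Dk r k x‖ ≤ uB r k := by
    intro x hx
    exact norm_Dk_le hr k x (ball_norm_lt hx).1.le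
  have := (convex_ball (0 : ℂ) (min π r)).norm_image_sub_le_of_norm_hasDerivWithin_le
    hder hbd h0 hz
  simpa [Fk_zero] using this

noncomputable def Qk (r : ℝ) (k : ℕ) : ℂ → ℂ :=
  Function.update (fun z => Fk r k z / z) 0 (Dk r k 0)

lemma Qk_zero (r : ℝ) (k : ℕ) : Qk r k 0 = Dk r k 0 := Function.update_self _ _ _

lemma Qk_ne {r : ℝ} {k : ℕ} {z : ℂ} (hz : z ≠ 0) : Qk r k z = Fk r k z / z :=
  Function.update_of_ne hz _ _

lemma norm_Qk_le {r : ℝ} (hr : 0 < r) (k : ℕ) (z : ℂ)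
    (hz : z ∈ Metric.ball (0 : ℂ) (min π r)) : ‖Qk r k z‖ ≤ uB r k := by
  rcases eq_or_ne z 0 with h | h
  · rw [h, Qk_zero]
    exact norm_Dk_le hr k 0 (by simpa using Real.pi_pos.le)
  · rw [Qk_ne h, norm_div]
    rw [div_le_iff₀ (by simpa using h)]
    exact norm_Fk_le_ball hr k z hz

lemma continuousAt_Qk {r : ℝ} (hr : 0 < r) (k : ℕ) (z : ℂ)
    (hz : z ∈ Metric.ball (0 : ℂ) (min π r)) : ContinuousAt (Qk r k) z := by
  rcases eq_or_ne z 0 with h | h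
  · subst h
    rw [ContinuousAt, Qk_zero, ← nhdsNE_sup_pure, tendsto_sup]
    constructor
    · have hd := hasDerivAt_Fk hr k 0 (by simpa using Real.pi_pos.le)
      have hslope := hasDerivAt_iff_tendsto_slope.mp hd
      refine hslope.congr' ?_
      filter_upwards [self_mem_nhdsWithin] with w hw
      rw [Set.mem_compl_iff, Set.mem_singleton_iff] at hw
      rw [Qk_ne hw, slope_def_field, Fk_zero]
      simp [div_eq_mul_inv, mul_comm]
    · exact (Qk_zero r k) ▸ tendsto_pure_nhds _ _
  · have hev : (fun w => Fk r k w / w) =ᶠ[nhds z] Qk r k := by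
      filter_upwards [isOpen_compl_singleton.mem_nhds (by simpa using h : z ∈ ({0}ᶜ : Set ℂ))] with w hw
      exact (Qk_ne hw).symm
    have hc : ContinuousAt (fun w => Fk r k w / w) z := by
      have h1 : ContinuousAt (Fk r k) z :=
        (hasDerivAt_Fk hr k z (ball_norm_lt hz).1.le).continuousAt
      exact h1.div continuousAt_id h
    exact hc.congr hev

noncomputable def Qbar (r : ℝ) (z : ℂ) : ℂ := ∑' k : ℕ, Qk r k z

lemma continuousAt_Qbar {r : ℝ} (hr : 0 < r) : ContinuousAt (Qbar r) 0 := by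
  have hball : IsOpen (Metric.ball (0 : ℂ) (min π r)) := Metric.isOpen_ball
  have h0 : (0 : ℂ) ∈ Metric.ball (0 : ℂ) (min π r) :=
    Metric.mem_ball_self (lt_min Real.pi_pos hr)
  have hunif := tendstoUniformlyOn_tsum (summable_uB hr)
    (fun k z hz => norm_Qk_le hr k z hz) (s := Metric.ball (0 : ℂ) (min π r))
  have hcont : ContinuousOn (Qbar r) (Metric.ball (0 : ℂ) (min π r)) := by
    apply hunif.continuousOn
    apply Filter.Eventually.frequently
    filter_upwards with t
    apply continuousOn_finset_sum
    intro k _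
    intro z hz
    exact (continuousAt_Qk hr k z hz).continuousWithinAt
  exact hcont.continuousAt (hball.mem_nhds h0)

lemma Qbar_zero (r : ℝ) : Qbar r 0 = ∑' k : ℕ, Dk r k 0 := by
  unfold Qbar
  exact tsum_congr fun k => Qk_zero r k

lemma tsum_Fk_div {r : ℝ} {z : ℂ} (hz : z ≠ 0) :
    (∑' k : ℕ, Fk r k z) / z = Qbar r z := by
  rw [Qbar, ← tsum_div_const]
  exact tsum_congr fun k => (Qk_ne hz).symm

lemma tendsto_sinh_div : Tendsto (fun u : ℂ => Complex.sinh u / u) (nhdsWithin 0 {0}ᶜ) (nhds 1) := by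
  have hd := hasDerivAt_iff_tendsto_slope.mp (Complex.hasDerivAt_sinh 0)
  rw [Complex.cosh_zero] at hd
  refine hd.congr ?_
  intro u
  rw [slope_def_field, Complex.sinh_zero]
  simp [div_eq_mul_inv]

noncomputable def dC (n : ℕ) : ℝ := (((2 * n + 2).factorial : ℝ))⁻¹ - (((2 * n + 3).factorial : ℝ))⁻¹

lemma dC_nonneg (n : ℕ) : 0 ≤ dC n := by
  unfold dC
  have h1 : (2 * n + 2).factorial ≤ (2 * n + 3).factorial :=
    Nat.factorial_le (by omega)
  have h2 : (0 : ℝ) < ((2 * n + 2).factorial : ℝ) := by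
    exact_mod_cast Nat.factorial_pos _
  have h3 : ((2 * n + 2).factorial : ℝ) ≤ ((2 * n + 3).factorial : ℝ) := by exact_mod_cast h1
  have h4 : (0 : ℝ) < ((2 * n + 3).factorial : ℝ) := by
    exact_mod_cast Nat.factorial_pos _
  have := inv_anti₀ h2 h3
  linarith

lemma dC_le_one (n : ℕ) : dC n ≤ 1 := by
  unfold dC
  have h2 : (1 : ℝ) ≤ ((2 * n + 2).factorial : ℝ) := by
    exact_mod_cast Nat.one_le_iff_ne_zero.mpr (Nat.factorial_pos _).ne'
  have h4 : (0 : ℝ) < ((2 * n + 3).factorial : ℝ) := by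
    exact_mod_cast Nat.factorial_pos _
  have h5 : (((2 * n + 2).factorial : ℝ))⁻¹ ≤ 1 := inv_le_one_of_one_le₀ h2
  have h6 : 0 < (((2 * n + 3).factorial : ℝ))⁻¹ := by positivity
  linarith

lemma dC_zero : dC 0 = 1 / 3 := by
  norm_num [dC, Nat.factorial]

noncomputable def MC (u : ℂ) : ℂ := ∑' n : ℕ, u ^ (2 * n) * ((dC n : ℝ) : ℂ)

lemma summable_MC {u : ℂ} (hu : ‖u‖ < 1) : Summable (fun n : ℕ => u ^ (2 * n) * ((dC n : ℝ) : ℂ)) := by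
  have hu0 : 0 ≤ ‖u‖ := norm_nonneg u
  have h1 : ‖u‖ ^ 2 < 1 := by nlinarith
  apply Summable.of_norm_bounded
    (summable_geometric_of_lt_one (by positivity) h1)
  intro n
  rw [norm_mul, norm_pow]
  have h2 : ‖((dC n : ℝ) : ℂ)‖ ≤ 1 := by
    rw [Complex.norm_real, Real.norm_eq_abs, abs_of_nonneg (dC_nonneg n)]
    exact dC_le_one n
  calc ‖u‖ ^ (2 * n) * ‖((dC n : ℝ) : ℂ)‖ ≤ ‖u‖ ^ (2 * n) * 1 := by
        gcongr
    _ = (‖u‖ ^ 2) ^ n := by rw [mul_one, ← pow_mul]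


lemma N_eq_MC {u : ℂ} (hu : ‖u‖ < 1) :
    u * Complex.cosh u - Complex.sinh u = u ^ 3 * MC u := by
  have hc := (Complex.hasSum_cosh u).mul_left u
  have hs := Complex.hasSum_sinh u
  have hsub := hc.sub hs
  have hterm : (fun n : ℕ => u * (u ^ (2 * n) / ((2 * n).factorial : ℂ))
      - u ^ (2 * n + 1) / ((2 * n + 1).factorial : ℂ))
      = fun n : ℕ => u ^ (2 * n + 1) * ((((2 * n).factorial : ℂ))⁻¹ - (((2 * n + 1).factorial : ℂ))⁻¹) := by
    funext n
    rw [pow_succ]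
    field_simp
  rw [hterm] at hsub
  set f : ℕ → ℂ := fun n => u ^ (2 * n + 1) * ((((2 * n).factorial : ℂ))⁻¹ - (((2 * n + 1).factorial : ℂ))⁻¹) with hf
  have hf0 : f 0 = 0 := by simp [hf, Nat.factorial]
  have hshift : HasSum (fun n => f (n + 1)) (u * Complex.cosh u - Complex.sinh u) := by
    rw [hasSum_nat_add_iff 1]
    simpa [hf0] using hsub
  have hterm2 : (fun n : ℕ => f (n + 1)) = fun n : ℕ => u ^ 3 * (u ^ (2 * n) * ((dC n : ℝ) : ℂ)) := by
    funext n
    simp only [hf]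
    have e1 : 2 * (n + 1) + 1 = 2 * n + 3 + 1 - 1 := by omega
    have e2 : u ^ (2 * (n + 1) + 1) = u ^ 3 * u ^ (2 * n) := by
      rw [← pow_add]
      congr 1
      omega
    rw [e2]
    unfold dC
    push_cast
    have e3 : 2 * (n + 1) = 2 * n + 2 := by omega
    have e4 : 2 * (n + 1) + 1 = 2 * n + 3 := by omega
    ring
  rw [hterm2] at hshift
  have hsummable := summable_MC hu
  have := (hsummable.hasSum.mul_left (u ^ 3)).unique hshift
  rw [MC, ← this]

lemma tendsto_MC : Tendsto MC (nhds 0) (nhds ((1 : ℂ) / 3)) := by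
  have key : ∀ u : ℂ, ‖u‖ ≤ 1 / 2 → ‖MC u - 1 / 3‖ ≤ 2 * ‖u‖ ^ 2 := by
    intro u hu
    have hu1 : ‖u‖ < 1 := by linarith
    have hsum := summable_MC hu1
    have hzero : MC u = u ^ (2 * 0) * ((dC 0 : ℝ) : ℂ) + ∑' n : ℕ, u ^ (2 * (n + 1)) * ((dC (n + 1) : ℝ) : ℂ) := by
      rw [MC]
      exact hsum.tsum_eq_zero_add
    have h13 : u ^ (2 * 0) * ((dC 0 : ℝ) : ℂ) = 1 / 3 := by
      rw [dC_zero]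
      norm_num
    rw [hzero, h13, add_sub_cancel_left]
    have hsum2 : Summable (fun n : ℕ => ‖u ^ (2 * (n + 1)) * ((dC (n + 1) : ℝ) : ℂ)‖) := by
      have := (summable_nat_add_iff 1).mpr hsum.norm
      exact this
    refine (norm_tsum_le_tsum_norm hsum2).trans ?_
    have hbound : ∀ n : ℕ, ‖u ^ (2 * (n + 1)) * ((dC (n + 1) : ℝ) : ℂ)‖ ≤ ‖u‖ ^ 2 * (1 / 4) ^ n := by
      intro n
      rw [norm_mul, norm_pow]
      have h2 : ‖((dC (n + 1) : ℝ) : ℂ)‖ ≤ 1 := by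
        rw [Complex.norm_real, Real.norm_eq_abs, abs_of_nonneg (dC_nonneg _)]
        exact dC_le_one _
      have h3 : ‖u‖ ^ (2 * (n + 1)) ≤ ‖u‖ ^ 2 * (1 / 4) ^ n := by
        have e1 : ‖u‖ ^ (2 * (n + 1)) = ‖u‖ ^ 2 * (‖u‖ ^ 2) ^ n := by
          rw [← pow_mul, ← pow_add]
          congr 1
          ring
        rw [e1]
        have h4 : ‖u‖ ^ 2 ≤ 1 / 4 := by nlinarith [norm_nonneg u]
        exact mul_le_mul_of_nonneg_left (pow_le_pow_left₀ (sq_nonneg _) h4 n) (sq_nonneg _)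
      calc ‖u‖ ^ (2 * (n + 1)) * ‖((dC (n + 1) : ℝ) : ℂ)‖ ≤ ‖u‖ ^ (2 * (n + 1)) * 1 := by gcongr
        _ = ‖u‖ ^ (2 * (n + 1)) := mul_one _
        _ ≤ ‖u‖ ^ 2 * (1 / 4) ^ n := h3
    have hgsum : Summable (fun n : ℕ => ‖u‖ ^ 2 * (1 / 4) ^ n) :=
      (summable_geometric_of_lt_one (by norm_num) (by norm_num)).mul_left _
    refine (hsum2.tsum_le_tsum hbound hgsum).trans ?_
    rw [tsum_mul_left, tsum_geometric_of_lt_one (by norm_num) (by norm_num)]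
    rw [show ((1 : ℝ) - 1 / 4)⁻¹ = 4 / 3 by norm_num]
    nlinarith [sq_nonneg ‖u‖]
  have h0 : Tendsto (fun u : ℂ => 2 * ‖u‖ ^ 2) (nhds 0) (nhds 0) := by
    have hcont : Continuous fun u : ℂ => 2 * ‖u‖ ^ 2 := by continuity
    have h := hcont.tendsto 0
    simpa using h
  have hev : ∀ᶠ u : ℂ in nhds 0, ‖MC u - 1 / 3‖ ≤ 2 * ‖u‖ ^ 2 := by
    filter_upwards [Metric.ball_mem_nhds (0 : ℂ) (by norm_num : (0:ℝ) < 1/2)] with u hu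
    refine key u ?_
    rw [Metric.mem_ball, dist_zero_right] at hu
    exact hu.le
  have hsq := squeeze_zero_norm' hev h0
  have h2 := hsq.add_const ((1 : ℂ) / 3)
  simpa using h2

lemma tendsto_N_cube :
    Tendsto (fun u : ℂ => (u * Complex.cosh u - Complex.sinh u) / u ^ 3)
      (nhdsWithin 0 {0}ᶜ) (nhds ((1 : ℂ) / 3)) := by
  have h1 := tendsto_MC.mono_left (nhdsWithin_le_nhds (s := ({0}ᶜ : Set ℂ)))
  refine h1.congr' ?_
  have hball : Metric.ball (0 : ℂ) 1 ∈ nhdsWithin (0 : ℂ) {0}ᶜ :=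
    nhdsWithin_le_nhds (Metric.ball_mem_nhds _ one_pos)
  filter_upwards [hball, self_mem_nhdsWithin] with u hu hu0
  rw [Metric.mem_ball, dist_zero_right] at hu
  rw [Set.mem_compl_iff, Set.mem_singleton_iff] at hu0
  rw [N_eq_MC hu, mul_comm, mul_div_assoc, div_self (pow_ne_zero 3 hu0), mul_one]

lemma tendsto_central {r : ℝ} (hr : 0 < r) :
    Tendsto (fun z : ℂ => ((al r : ℂ) * ccoth ((al r : ℂ) * z) - 1 / z) / z)
      (nhdsWithin 0 {0}ᶜ) (nhds (((al r : ℂ)) ^ 2 / 3)) := by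
  have hal : (0 : ℝ) < al r := al_pos hr
  have halC : ((al r : ℝ) : ℂ) ≠ 0 := by
    simp only [ne_eq, Complex.ofReal_eq_zero]
    exact hal.ne'
  have hA : Tendsto (fun z : ℂ => (al r : ℂ) * z) (nhdsWithin 0 {0}ᶜ) (nhdsWithin 0 {0}ᶜ) := by
    rw [tendsto_nhdsWithin_iff]
    constructor
    · have hcm : Continuous (fun z : ℂ => (al r : ℂ) * z) := continuous_const.mul continuous_id
      have := hcm.tendsto (0 : ℂ)
      simp only [mul_zero] at this
      exact this.mono_left nhdsWithin_le_nhds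
    · filter_upwards [self_mem_nhdsWithin] with z hz
      rw [Set.mem_compl_iff, Set.mem_singleton_iff] at hz ⊢
      exact mul_ne_zero halC hz
  have hinv : Tendsto (fun u : ℂ => u / Complex.sinh u) (nhdsWithin 0 {0}ᶜ) (nhds 1) := by
    have := tendsto_sinh_div.inv₀ one_ne_zero
    simp only [inv_one] at this
    refine this.congr fun u => ?_
    rw [inv_div]
  have hmul := tendsto_N_cube.mul hinv
  rw [mul_one] at hmul
  have hcomp := hmul.comp hA
  have hfinal := hcomp.const_mul (((al r : ℝ) : ℂ) ^ 2)
  have hval : ((al r : ℂ)) ^ 2 / 3 = ((al r : ℝ) : ℂ) ^ 2 * ((1 : ℂ) / 3) := by ring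
  rw [hval]
  refine hfinal.congr' ?_
  have hballr : Metric.ball (0 : ℂ) r ∈ nhdsWithin (0 : ℂ) {0}ᶜ :=
    nhdsWithin_le_nhds (Metric.ball_mem_nhds _ hr)
  filter_upwards [hballr, self_mem_nhdsWithin] with z hz hz0
  rw [Metric.mem_ball, dist_zero_right] at hz
  rw [Set.mem_compl_iff, Set.mem_singleton_iff] at hz0
  have hsinh : Complex.sinh ((al r : ℂ) * z) ≠ 0 := by
    apply sinh_ne_zero_small (mul_ne_zero halC hz0)
    rw [norm_mul, Complex.norm_real, Real.norm_eq_abs, abs_of_pos hal]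
    have : al r * r = π / 2 := by
      unfold al
      field_simp
    nlinarith [Real.pi_pos]
  show ((al r : ℝ) : ℂ) ^ 2 *
      (((al r : ℂ) * z * Complex.cosh ((al r : ℂ) * z) - Complex.sinh ((al r : ℂ) * z))
          / ((al r : ℂ) * z) ^ 3 * ((al r : ℂ) * z / Complex.sinh ((al r : ℂ) * z)))
      = ((al r : ℂ) * ccoth ((al r : ℂ) * z) - 1 / z) / z
  rw [ccoth]
  field_simp

lemma Dk_zero' (r : ℝ) (k : ℕ) :
    Dk r k 0 = ((-2 * al r * ((Real.sinh (al r * (2 * π * ((k : ℝ) + 1)))) ^ 2)⁻¹ : ℝ) : ℂ) := by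
  unfold Dk
  have h1 : wk r ((k : ℤ) + 1) 0 = ((al r * (2 * π * ((k : ℝ) + 1)) : ℝ) : ℂ) := by
    unfold wk
    push_cast
    ring
  have h2 : wk r (-((k : ℤ) + 1)) 0 = ((-(al r * (2 * π * ((k : ℝ) + 1))) : ℝ) : ℂ) := by
    unfold wk
    push_cast
    ring
  rw [h1, h2, ← Complex.ofReal_sinh, ← Complex.ofReal_sinh, Real.sinh_neg]
  push_cast
  ring

lemma value_eq {r : ℝ} (hr : 0 < r) :
    1 / (2 * (r : ℂ)) - ((al r : ℝ) : ℂ) ^ 2 / 3 - ((al r : ℝ) : ℂ) * (∑' k : ℕ, Dk r k 0)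
      = ((1 / (2 * r) - π ^ 2 / (12 * r ^ 2)
          + (π ^ 2 / (2 * r ^ 2)) *
            ∑' k : ℕ, ((Real.sinh (((k : ℝ) + 1) * π ^ 2 / r)) ^ 2)⁻¹ : ℝ) : ℂ) := by
  have hrne : r ≠ 0 := hr.ne'
  have harg : ∀ k : ℕ, al r * (2 * π * ((k : ℝ) + 1)) = ((k : ℝ) + 1) * π ^ 2 / r := by
    intro k
    unfold al
    field_simp
  have hDk : ∀ k : ℕ, Dk r k 0
      = ((-2 * al r * ((Real.sinh (((k : ℝ) + 1) * π ^ 2 / r)) ^ 2)⁻¹ : ℝ) : ℂ) := by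
    intro k
    rw [Dk_zero' r k, harg k]
  have htsum : (∑' k : ℕ, Dk r k 0)
      = ((∑' k : ℕ, -2 * al r * ((Real.sinh (((k : ℝ) + 1) * π ^ 2 / r)) ^ 2)⁻¹ : ℝ) : ℂ) := by
    rw [Complex.ofReal_tsum]
    exact tsum_congr hDk
  rw [htsum, tsum_mul_left]
  rw [show (1 : ℂ) / (2 * (r : ℂ)) = (((1 : ℝ) / (2 * r) : ℝ) : ℂ) by push_cast; ring]
  rw [← Complex.ofReal_pow, ← Complex.ofReal_mul]
  rw [show (((al r : ℝ) ^ 2 : ℝ) : ℂ) / 3 = (((al r ^ 2 / 3 : ℝ)) : ℂ) by push_cast; ring]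
  rw [← Complex.ofReal_sub, ← Complex.ofReal_sub]
  rw [Complex.ofReal_inj]
  unfold al
  field_simp
  ring

end Stmt16Aux


/-- Fix `r > 0` and for `0 < |z| < min(2π, 2r)` set
`G_N(z) = z/(2r) - (π/(2r)) ∑_{k=-N}^N coth(π(z+2πk)/(2r))`.  Then `G(z) = lim G_N(z)`
exists, and `(G(z) + 1/z)/z → 1/(2r) - π²/(12r²) + (π²/(2r²)) ∑_{k≥1} sinh(kπ²/r)⁻²`
as `z → 0`, `z ≠ 0`. -/
theorem stmt16 (r : ℝ) (hr : 0 < r) :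
    ∃ G : ℂ → ℂ,
      (∀ z : ℂ, 0 < ‖z‖ → ‖z‖ < min (2 * π) (2 * r) →
        Tendsto (fun N : ℕ =>
            z / (2 * (r : ℂ)) - ((π : ℂ) / (2 * (r : ℂ))) *
              ∑ k ∈ Finset.Icc (-(N : ℤ)) (N : ℤ),
                ccoth ((π : ℂ) * (z + 2 * (π : ℂ) * (k : ℂ)) / (2 * (r : ℂ))))
          atTop (nhds (G z))) ∧
      Tendsto (fun z : ℂ => (G z + 1 / z) / z) (nhdsWithin 0 {0}ᶜ)
        (nhds ((1 / (2 * r) - π ^ 2 / (12 * r ^ 2)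
          + (π ^ 2 / (2 * r ^ 2)) *
            ∑' k : ℕ, ((Real.sinh (((k : ℝ) + 1) * π ^ 2 / r)) ^ 2)⁻¹ : ℝ) : ℂ)) := by
  refine ⟨Stmt16Aux.Gdef r, fun z hz0 hz => ?_, ?_⟩
  · apply Stmt16Aux.cond1 hr z
    exact hz.trans_le (min_le_left _ _)
  · have hQ : Tendsto (Stmt16Aux.Qbar r) (nhdsWithin 0 {0}ᶜ) (nhds (Stmt16Aux.Qbar r 0)) :=
      (Stmt16Aux.continuousAt_Qbar hr).mono_left nhdsWithin_le_nhds
    have hcent := Stmt16Aux.tendsto_central hr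
    have hmain : Tendsto (fun z : ℂ => 1 / (2 * (r : ℂ))
        - (((Stmt16Aux.al r : ℝ) : ℂ) * ccoth (((Stmt16Aux.al r : ℝ) : ℂ) * z) - 1 / z) / z
        - ((Stmt16Aux.al r : ℝ) : ℂ) * Stmt16Aux.Qbar r z)
        (nhdsWithin 0 {0}ᶜ)
        (nhds (1 / (2 * (r : ℂ)) - ((Stmt16Aux.al r : ℝ) : ℂ) ^ 2 / 3
          - ((Stmt16Aux.al r : ℝ) : ℂ) * Stmt16Aux.Qbar r 0)) :=
      (tendsto_const_nhds.sub hcent).sub (hQ.const_mul _)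
    rw [Stmt16Aux.Qbar_zero, Stmt16Aux.value_eq hr] at hmain
    refine hmain.congr' ?_
    filter_upwards [self_mem_nhdsWithin] with z hz0
    rw [Set.mem_compl_iff, Set.mem_singleton_iff] at hz0
    have hg0 : Stmt16Aux.gk r 0 z = ccoth (((Stmt16Aux.al r : ℝ) : ℂ) * z) := by
      unfold Stmt16Aux.gk Stmt16Aux.wk
      norm_num
    have hT := Stmt16Aux.tsum_Fk_div (r := r) hz0
    unfold Stmt16Aux.Gdef
    rw [hg0, ← hT]
    field_simp
    ring
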